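/- Characterisation used by the optimisation: if acyclic(ws ∪ rf ∪ fr ∪ po-loc) holds (uniproc) and the full relation ws ∪ rf ∪ fr ∪ po has a cycle, then it has a cycle in which, for each address, at most three accesses to that address appear, from pairwise distinct processors. -/

import Mathlib

structure Evt where
  id : ℕ
  proc : ℕ
  addr : ℕ
  isWrite : Bool
deriving DecidableEq

def acyclicRel (R : Evt → Evt → Prop) : Prop :=
  Irreflexive (Relation.TransGen R)

/-- `c` is a cycle of `R`: nonempty, and each element is `R`-related to the
next one (cyclically). -/
def IsCycle (R : Evt → Evt → Prop) (c : List Evt) : Prop :=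
  c ≠ [] ∧ ∀ p ∈ c.zip (c.rotate 1), R p.1 p.2

/-- Condition (ii) of critical cycles: per address, at most three accesses,
from pairwise distinct processors. -/
def AddrCondition (c : List Evt) : Prop :=
  ∀ a : ℕ, (c.filter (fun e => e.addr = a)).length ≤ 3 ∧
    (c.filter (fun e => e.addr = a)).Pairwise (fun e e' => e.proc ≠ e'.proc)

def dEvt : Evt := ⟨0,0,0,false⟩

def Cyc (R : Evt → Evt → Prop) (c : List Evt) : Prop :=
  c ≠ [] ∧ ∀ i, i < c.length → R (c.getD i dEvt) (c.getD ((i+1) % c.length) dEvt)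

lemma Cyc.pos {R : Evt → Evt → Prop} {c : List Evt} (h : Cyc R c) : 0 < c.length :=
  List.length_pos_iff.mpr h.1

lemma isCycle_iff_cyc (R : Evt → Evt → Prop) (c : List Evt) : IsCycle R c ↔ Cyc R c := by
  have key : ∀ i (hi : i < c.length), ∀ (hz : i < (c.zip (c.rotate 1)).length),
      (c.zip (c.rotate 1)).getD i (dEvt, dEvt)
        = (c.getD i dEvt, c.getD ((i+1) % c.length) dEvt) := by
    intro i hi hz
    have hn : 0 < c.length := by omega
    have hm : (i+1) % c.length < c.length := Nat.mod_lt _ hn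
    have hr : i < (c.rotate 1).length := by rwa [List.length_rotate]
    rw [List.getD_eq_getElem _ _ hz, List.getElem_zip,
      List.getD_eq_getElem _ _ hi, List.getD_eq_getElem _ _ hm]
    refine Prod.ext rfl ?_
    simp only [List.getElem_rotate]
  constructor
  · rintro ⟨h1, h2⟩
    have hn : 0 < c.length := List.length_pos_iff.mpr h1
    refine ⟨h1, fun i hi => ?_⟩
    have hz : i < (c.zip (c.rotate 1)).length := by
      simp [List.length_zip]; omega
    have hmem : (c.zip (c.rotate 1)).getD i (dEvt, dEvt) ∈ c.zip (c.rotate 1) := by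
      rw [List.getD_eq_getElem _ _ hz]
      exact List.getElem_mem _
    have := h2 _ hmem
    rwa [key i hi hz] at this
  · rintro ⟨h1, h2⟩
    have hn : 0 < c.length := List.length_pos_iff.mpr h1
    refine ⟨h1, fun p hp => ?_⟩
    rw [List.mem_iff_getElem] at hp
    obtain ⟨i, hi, hpe⟩ := hp
    have hi' : i < c.length := by simpa [List.length_zip] using hi
    have := h2 i hi'
    have hpd : p = (c.getD i dEvt, c.getD ((i+1) % c.length) dEvt) := by
      rw [← key i hi' hi, List.getD_eq_getElem _ _ hi, hpe]
    rw [hpd]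
    exact this

lemma getD_rotate {c : List Evt} {k t : ℕ} (ht : t < c.length) :
    (c.rotate k).getD t dEvt = c.getD ((t + k) % c.length) dEvt := by
  have h1 : t < (c.rotate k).length := by rwa [List.length_rotate]
  have h2 : (t + k) % c.length < c.length := Nat.mod_lt _ (by omega)
  rw [List.getD_eq_getElem _ _ h1, List.getD_eq_getElem _ _ h2, List.getElem_rotate]

lemma cyc_rotate {R : Evt → Evt → Prop} {c : List Evt} (h : Cyc R c) (k : ℕ) :
    Cyc R (c.rotate k) := by
  have hn : 0 < c.length := h.pos
  refine ⟨by simp [← List.length_pos_iff, hn], fun t ht => ?_⟩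
  rw [List.length_rotate] at ht ⊢
  rw [getD_rotate ht, getD_rotate (Nat.mod_lt _ hn)]
  have := h.2 ((t + k) % c.length) (Nat.mod_lt _ hn)
  have e1 : ((t + k) % c.length + 1) % c.length = ((t+1) % c.length + k) % c.length := by
    rw [Nat.mod_add_mod, Nat.mod_add_mod]
    congr 1; omega
  rwa [e1] at this

lemma cyc_take {R : Evt → Evt → Prop} {c : List Evt} (h : Cyc R c) {m : ℕ}
    (hm : m + 1 ≤ c.length) (he : R (c.getD m dEvt) (c.getD 0 dEvt)) :
    Cyc R (c.take (m+1)) := by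
  have hn : 0 < c.length := h.pos
  have hlt : (c.take (m+1)).length = m + 1 := by
    rw [List.length_take]; omega
  refine ⟨by rw [← List.length_pos_iff, hlt]; omega, fun t ht => ?_⟩
  rw [hlt] at ht ⊢
  have hgt : ∀ s (hs : s < m + 1), (c.take (m+1)).getD s dEvt = c.getD s dEvt := by
    intro s hs
    have hs1 : s < (c.take (m+1)).length := by omega
    have hs2 : s < c.length := by omega
    rw [List.getD_eq_getElem _ _ hs1, List.getD_eq_getElem _ _ hs2, List.getElem_take]
  rcases Nat.lt_or_ge t m with htm | htm
  · have e1 : (t+1) % (m+1) = t+1 := Nat.mod_eq_of_lt (by omega)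
    rw [e1, hgt t ht, hgt (t+1) (by omega)]
    have := h.2 t (by omega)
    rwa [Nat.mod_eq_of_lt (by omega)] at this
  · have htm' : t = m := by omega
    subst htm'
    have e1 : (t+1) % (t+1) = 0 := Nat.mod_self _
    rw [e1, hgt t ht, hgt 0 (by omega)]
    exact he

lemma shorten {R : Evt → Evt → Prop} {c : List Evt} (hc : Cyc R c) {i j : ℕ}
    (hi : i < c.length) (hj : j < c.length) (hne : j ≠ i)
    (hne2 : j ≠ (i+1) % c.length)
    (he : R (c.getD i dEvt) (c.getD j dEvt)) :
    ∃ c', Cyc R c' ∧ c'.length < c.length := by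
  have hn : 0 < c.length := hc.pos
  set n := c.length with hnn
  set m := (i + (n - j)) % n with hm
  have hmlt : m < n := Nat.mod_lt _ hn
  have hmj : (m + j) % n = i := by
    rw [hm, Nat.mod_add_mod, show i + (n - j) + j = i + n from by omega,
      Nat.add_mod_right, Nat.mod_eq_of_lt hi]
  have hmne : m ≠ n - 1 := by
    intro hEq
    apply hne2
    have : (i + 1) % n = j := by
      rw [← hmj, Nat.mod_add_mod, hEq, show n - 1 + j + 1 = j + n from by omega,
        Nat.add_mod_right, Nat.mod_eq_of_lt hj]
    omega
  have hc' : Cyc R (c.rotate j) := cyc_rotate hc j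
  have e0 : (c.rotate j).getD 0 dEvt = c.getD j dEvt := by
    rw [getD_rotate hn]
    congr 1
    rw [Nat.zero_add, Nat.mod_eq_of_lt hj]
  have em : (c.rotate j).getD m dEvt = c.getD i dEvt := by
    rw [getD_rotate hmlt, hmj]
  have he' : R ((c.rotate j).getD m dEvt) ((c.rotate j).getD 0 dEvt) := by
    rw [e0, em]; exact he
  refine ⟨(c.rotate j).take (m+1), cyc_take hc' (by rw [List.length_rotate]; omega) he', ?_⟩
  rw [List.length_take, List.length_rotate]
  omega

lemma dup_shorten {R : Evt → Evt → Prop} {c : List Evt} (hc : Cyc R c) {i j : ℕ}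
    (hij : i < j) (hj : j < c.length)
    (heq : c.getD i dEvt = c.getD j dEvt) :
    ∃ c', Cyc R c' ∧ c'.length < c.length := by
  have hn : 0 < c.length := hc.pos
  set n := c.length with hnn
  have hc' : Cyc R (c.rotate i) := cyc_rotate hc i
  set m := j - i - 1 with hm
  have em : (c.rotate i).getD m dEvt = c.getD (j-1) dEvt := by
    rw [getD_rotate (by omega)]
    congr 1
    rw [show m + i = j - 1 from by omega, Nat.mod_eq_of_lt (by omega)]
  have e0 : (c.rotate i).getD 0 dEvt = c.getD i dEvt := by
    rw [getD_rotate hn]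
    congr 1
    rw [Nat.zero_add, Nat.mod_eq_of_lt (by omega)]
  have he' : R ((c.rotate i).getD m dEvt) ((c.rotate i).getD 0 dEvt) := by
    rw [e0, em, heq]
    have := hc.2 (j-1) (by omega)
    rwa [show (j-1+1) % n = j from by rw [show j - 1 + 1 = j from by omega]; exact Nat.mod_eq_of_lt hj] at this
  refine ⟨(c.rotate i).take (m+1), cyc_take hc' (by rw [List.length_rotate]; omega) he', ?_⟩
  rw [List.length_take, List.length_rotate]
  omega

lemma chain_snoc {R : Evt → Evt → Prop} :
    ∀ (l : List Evt) (x y z : Evt), List.Chain R x (l ++ [y]) → R y z →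
      List.Chain R x (l ++ [y] ++ [z])
  | [], x, y, z, h, hyz => by
      simp only [List.nil_append, List.singleton_append, List.Chain, List.isChain_cons_cons] at h ⊢
      exact ⟨h.1, hyz, List.Chain.nil⟩
  | a :: t, x, y, z, h, hyz => by
      simp only [List.cons_append, List.Chain, List.isChain_cons_cons] at h ⊢
      exact ⟨h.1, chain_snoc t a y z h.2 hyz⟩

lemma cyc_of_transGen {R : Evt → Evt → Prop} {e : Evt}
    (h : Relation.TransGen R e e) : ∃ c, Cyc R c := by
  have haux : ∀ {x y : Evt}, Relation.TransGen R x y → ∃ l, List.Chain R x (l ++ [y]) := by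
    intro x y h
    induction h with
    | single h => exact ⟨[], by exact List.IsChain.cons_cons h (List.IsChain.singleton _)⟩
    | tail hxy hyz ih =>
        obtain ⟨l, hl⟩ := ih
        exact ⟨l ++ [_], chain_snoc l _ _ _ hl hyz⟩
  obtain ⟨l, hl⟩ := haux h
  set L := l ++ [e] with hL
  set n := l.length + 1 with hn
  have hLlen : L.length = n := by simp [hL, hn]
  have hch : (∀ h : 0 < L.length, R e (L.get ⟨0, h⟩)) ∧
      ∀ (i : ℕ) (h : i < L.length - 1), R (L.get ⟨i, by omega⟩) (L.get ⟨i+1, by omega⟩) := by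
    have hgi := List.isChain_iff_getElem.mp hl
    refine ⟨fun h0 => ?_, fun i hi => ?_⟩
    · have := hgi 0 (by simp; omega); simpa using this
    · have := hgi (i+1) (by simp; omega); simpa using this
  have hch0 : R e (L.getD 0 dEvt) := by
    have h0 : 0 < L.length := by omega
    have := hch.1 h0
    rwa [List.get_eq_getElem, ← List.getD_eq_getElem _ dEvt] at this
  have hchs : ∀ i, i < L.length - 1 → R (L.getD i dEvt) (L.getD (i+1) dEvt) := by
    intro i hi
    have := hch.2 i hi
    rwa [List.get_eq_getElem, List.get_eq_getElem,
      ← List.getD_eq_getElem _ dEvt, ← List.getD_eq_getElem _ dEvt] at this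
  have hK : ∀ t, t < n → L.getD t dEvt = (e :: l).getD ((t+1) % n) dEvt := by
    intro t ht
    rcases Nat.lt_or_ge t l.length with h1 | h1
    · have e2 : (t+1) % n = t+1 := Nat.mod_eq_of_lt (by omega)
      rw [e2, List.getD_cons_succ, hL, List.getD_append _ _ _ _ h1]
    · have h2 : t = l.length := by omega
      subst h2
      have e2 : (l.length+1) % n = 0 := by rw [hn]; exact Nat.mod_self _
      rw [e2, List.getD_cons_zero, List.getD_eq_getElem _ _ (by rw [hLlen]; omega)]
      exact List.getElem_concat_length rfl _
  refine ⟨e :: l, by simp, fun t ht => ?_⟩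
  simp only [List.length_cons] at ht
  have hlen : (e :: l).length = n := by simp [hn]
  rw [hlen]
  rcases Nat.eq_zero_or_pos t with h0 | h0
  · subst h0
    rw [List.getD_cons_zero, ← hK 0 (by omega)]
    exact hch0
  · obtain ⟨s, rfl⟩ : ∃ s, t = s + 1 := ⟨t - 1, by omega⟩
    have hs : s < L.length - 1 := by rw [hLlen]; omega
    have := hchs s hs
    rw [hK s (by omega), hK (s+1) (by omega)] at this
    have e3 : (s+1) % n = s + 1 := Nat.mod_eq_of_lt (by omega)
    rw [e3] at this
    exact this

lemma exists_min_cyc {R : Evt → Evt → Prop} (h : ∃ e, Relation.TransGen R e e) :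
    ∃ c, Cyc R c ∧ ∀ c', Cyc R c' → c.length ≤ c'.length := by
  obtain ⟨e, he⟩ := h
  obtain ⟨c0, hc0⟩ := cyc_of_transGen he
  have hex : ∃ k, ∃ c, Cyc R c ∧ c.length = k := ⟨c0.length, c0, hc0, rfl⟩
  classical
  obtain ⟨c, hc, hck⟩ := Nat.find_spec hex
  refine ⟨c, hc, fun c' hc' => ?_⟩
  rw [hck]
  exact Nat.find_min' hex ⟨c', hc', rfl⟩

abbrev RR (ws rf fr po : Evt → Evt → Prop) (a b : Evt) : Prop :=
  ws a b ∨ rf a b ∨ fr a b ∨ po a b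

abbrev UU (ws rf fr po : Evt → Evt → Prop) (a b : Evt) : Prop :=
  ws a b ∨ rf a b ∨ fr a b ∨ (po a b ∧ a.addr = b.addr)

/-- under uniproc, any cycle of ws ∪ rf ∪ fr ∪ po can be chosen
so that for each address at most three accesses to it occur, from pairwise
distinct processors. -/
theorem critical_cycle_addr_condition
    (ws rf fr po : Evt → Evt → Prop)
    -- po is a union of per-processor total orders
    (hpo_proc : ∀ a b, po a b → a.proc = b.proc)
    (hpo_irrefl : ∀ a, ¬ po a a)
    (hpo_trans : ∀ a b c, po a b → po b c → po a c)
    (hpo_total : ∀ a b, a.proc = b.proc → a ≠ b → po a b ∨ po b a)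
    -- ws is a per-address total order on writes
    (hws : ∀ a b, ws a b → a.isWrite = true ∧ b.isWrite = true ∧ a.addr = b.addr)
    (hws_irrefl : ∀ a, ¬ ws a a)
    (hws_trans : ∀ a b c, ws a b → ws b c → ws a c)
    (hws_total : ∀ a b, a.isWrite = true → b.isWrite = true → a.addr = b.addr →
      a ≠ b → ws a b ∨ ws b a)
    -- rf is functional with same-address write-read pairs
    (hrf : ∀ a b, rf a b → a.isWrite = true ∧ b.isWrite = false ∧ a.addr = b.addr)
    (hrf_unique : ∀ r w w', rf w r → rf w' r → w = w')
    -- fr derived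
    (hfr : ∀ r w, fr r w ↔ ∃ w₀, rf w₀ r ∧ ws w₀ w)
    -- uniproc
    (huniproc : acyclicRel (fun a b => ws a b ∨ rf a b ∨ fr a b ∨
      (po a b ∧ a.addr = b.addr)))
    -- the full relation has a cycle
    (hcyc : ∃ e, Relation.TransGen
      (fun a b => ws a b ∨ rf a b ∨ fr a b ∨ po a b) e e) :
    ∃ c : List Evt,
      IsCycle (fun a b => ws a b ∨ rf a b ∨ fr a b ∨ po a b) c ∧
      AddrCondition c := by
  classical
  obtain ⟨c, hc, hmin⟩ := exists_min_cyc (R := RR ws rf fr po) hcyc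
  set n := c.length with hnd
  have hn0 : 0 < n := hc.pos
  set g : ℕ → Evt := fun i => c.getD (i % n) dEvt with hg
  have gdef : ∀ i, g i = c.getD (i % n) dEvt := fun _ => rfl
  have gcong : ∀ i j, i % n = j % n → g i = g j := by
    intro i j h; rw [gdef, gdef, h]
  have gper : ∀ i, g (i + n) = g i := fun i => gcong _ _ (by rw [Nat.add_mod_right])
  -- auxiliary facts about the relations
  have haddr_fr : ∀ x y, fr x y → x.addr = y.addr := by
    intro x y h
    obtain ⟨w0, h1, h2⟩ := (hfr _ _).mp h
    exact ((hrf _ _ h1).2.2).symm.trans (hws _ _ h2).2.2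
  have hfrW : ∀ x y, fr x y → x.isWrite = false ∧ y.isWrite = true := by
    intro x y h
    obtain ⟨w0, h1, h2⟩ := (hfr _ _).mp h
    exact ⟨(hrf _ _ h1).2.1, (hws _ _ h2).2.1⟩
  have frws : ∀ {u v w}, fr u v → ws v w → fr u w := by
    intro u v w h1 h2
    obtain ⟨w0, ha, hb⟩ := (hfr _ _).mp h1
    exact (hfr _ _).mpr ⟨w0, ha, hws_trans _ _ _ hb h2⟩
  have hRirr : ∀ x, ¬ RR ws rf fr po x x := by
    intro x hx
    rcases hx with h|h|h|h
    · exact hws_irrefl x h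
    · have h1 := (hrf _ _ h).1
      have h2 := (hrf _ _ h).2.1
      simp [h1] at h2
    · have h1 := (hfrW _ _ h).1
      have h2 := (hfrW _ _ h).2
      simp [h1] at h2
    · exact hpo_irrefl x h
  have hRaddr : ∀ x y, RR ws rf fr po x y → po x y ∨ x.addr = y.addr := by
    intro x y h
    rcases h with h|h|h|h
    · exact Or.inr (hws _ _ h).2.2
    · exact Or.inr (hrf _ _ h).2.2
    · exact Or.inr (haddr_fr _ _ h)
    · exact Or.inl h
  have hRU : ∀ {x y}, RR ws rf fr po x y → x.addr = y.addr → UU ws rf fr po x y := by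
    intro x y h ha
    rcases h with h|h|h|h
    exacts [Or.inl h, Or.inr (Or.inl h), Or.inr (Or.inr (Or.inl h)),
      Or.inr (Or.inr (Or.inr ⟨h, ha⟩))]
  have huni : ∀ x, ¬ Relation.TransGen (UU ws rf fr po) x x := huniproc
  have hU2 : ∀ x y, UU ws rf fr po x y → UU ws rf fr po y x → False := fun x y h1 h2 =>
    huni x (Relation.TransGen.head h1 (Relation.TransGen.single h2))
  have hU3 : ∀ x y z, UU ws rf fr po x y → UU ws rf fr po y z → UU ws rf fr po z x → False :=
    fun x y z h1 h2 h3 =>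
    huni x (Relation.TransGen.head h1 (Relation.TransGen.head h2 (Relation.TransGen.single h3)))
  -- edges of the minimal cycle
  have hedge : ∀ i, RR ws rf fr po (g i) (g (i+1)) := by
    intro i
    have h := hc.2 (i % n) (Nat.mod_lt _ hn0)
    have e1 : (i % n + 1) % n = (i+1) % n := by rw [Nat.mod_add_mod]
    rw [gdef i, gdef (i+1), ← e1]
    exact h
  -- no shortcuts
  have ns : ∀ i j, RR ws rf fr po (g i) (g j) → g j = g (i+1) := by
    intro i j hRij
    by_cases hadj : j % n = (i % n + 1) % n
    · exact gcong j (i+1) (by rw [hadj, Nat.mod_add_mod])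
    · exfalso
      by_cases heq : j % n = i % n
      · rw [gdef i, gdef j, heq] at hRij
        exact hRirr _ hRij
      · obtain ⟨c', hc', hlt⟩ := shorten hc (Nat.mod_lt i hn0) (Nat.mod_lt j hn0) heq hadj hRij
        exact absurd (hmin c' hc') (by omega)
  have ginj : ∀ i j, g i = g j → i % n = j % n := by
    intro i j h
    by_contra hne
    rcases Nat.lt_or_ge (i % n) (j % n) with hlt | hge
    · obtain ⟨c', hc', hl⟩ := dup_shorten hc hlt (Nat.mod_lt j hn0) h
      exact absurd (hmin c' hc') (by omega)
    · have hlt2 : j % n < i % n := by omega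
      obtain ⟨c', hc', hl⟩ := dup_shorten hc hlt2 (Nat.mod_lt i hn0) h.symm
      exact absurd (hmin c' hc') (by omega)
  have gne : ∀ i d, 0 < d → d < n → g (i + d) = g i → False := by
    intro i d hd1 hd2 h
    have hm := ginj _ _ h
    have hm2 : i + d ≡ i + 0 [MOD n] := by rw [Nat.add_zero]; exact hm
    have := Nat.ModEq.add_left_cancel' i hm2
    rw [Nat.ModEq] at this
    rw [Nat.zero_mod, Nat.mod_eq_of_lt hd2] at this
    omega
  -- length at least 3
  have hn1 : n ≠ 1 := by
    intro h1
    have h := hedge 0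
    have e : g 1 = g 0 := gcong 1 0 (by rw [h1])
    rw [e] at h
    exact hRirr _ h
  have hn2 : n ≠ 2 := by
    intro h2
    have e0 := hedge 0
    have e1 := hedge 1
    have e20 : g 2 = g 0 := gcong 2 0 (by rw [h2])
    rw [e20] at e1
    rcases hRaddr _ _ e0 with hp0 | ha0
    · rcases hRaddr _ _ e1 with hp1 | ha1
      · exact hpo_irrefl _ (hpo_trans _ _ _ hp0 hp1)
      · exact hU2 _ _ (hRU e0 ha1.symm) (hRU e1 ha1)
    · exact hU2 _ _ (hRU e0 ha0) (hRU e1 ha0.symm)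
  have hn3 : 3 ≤ n := by omega
  -- Part A : distinct same-address events have distinct processors
  have hApo' : ∀ k, (g (k+1)).addr = (g (k+2)).addr → po (g (k+1)) (g (k+2)) → False := by
    intro k haddr hpo
    have epx := hedge k
    have eyz := hedge (k+2)
    rw [show k+2+1 = k+3 from by omega] at eyz
    have K1 : RR ws rf fr po (g k) (g (k+2)) → False := by
      intro h
      have h2 := ns k (k+2) h
      exact gne (k+1) 1 one_pos (by omega) (by rw [show k+1+1 = k+2 from by omega]; exact h2)
    have K2 : RR ws rf fr po (g (k+1)) (g (k+3)) → False := by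
      intro h
      have h2 := ns (k+1) (k+3) h
      exact gne (k+2) 1 one_pos (by omega) (by rw [show k+2+1 = k+3 from by omega]; exact h2)
    have K3 : RR ws rf fr po (g k) (g (k+3)) → False := by
      intro h
      have h2 := ns k (k+3) h
      exact gne (k+1) 2 (by omega) (by omega) (by rw [show k+1+2 = k+3 from by omega]; exact h2)
    have hxney : g (k+1) ≠ g (k+2) := by
      intro h
      exact gne (k+1) 1 one_pos (by omega) (by rw [show k+1+1 = k+2 from by omega]; exact h.symm)
    have wsxy_of : (g (k+1)).isWrite = true → (g (k+2)).isWrite = true →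
        ws (g (k+1)) (g (k+2)) := by
      intro hxw hyw
      rcases hws_total _ _ hxw hyw haddr hxney with h|h
      · exact h
      · exact absurd (hU2 _ _ (Or.inr (Or.inr (Or.inr ⟨hpo, haddr⟩))) (Or.inl h)) (by simp)
    have XWYR : (g (k+1)).isWrite = true → ∀ w₁, rf w₁ (g (k+2)) → ws w₁ (g (k+3)) → False := by
      intro xw w₁ h1 h2
      have w1w : w₁.isWrite = true := (hrf _ _ h1).1
      have haw : (g (k+1)).addr = w₁.addr := haddr.trans (hrf _ _ h1).2.2.symm
      by_cases he : g (k+1) = w₁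
      · exact K2 (Or.inl (he ▸ h2))
      · rcases hws_total _ _ xw w1w haw he with h|h
        · exact K2 (Or.inl (hws_trans _ _ _ h h2))
        · exact hU2 _ _ (Or.inr (Or.inr (Or.inr ⟨hpo, haddr⟩)))
            (Or.inr (Or.inr (Or.inl ((hfr _ _).mpr ⟨w₁, h1, h⟩))))
    have YW : (g (k+2)).isWrite = true → False := by
      intro yw
      rcases epx with h1|h1|h1|h1
      · exact K1 (Or.inl (hws_trans _ _ _ h1 (wsxy_of (hws _ _ h1).2.1 yw)))
      · have pw := (hrf _ _ h1).1
        have paddr : (g k).addr = (g (k+2)).addr := ((hrf _ _ h1).2.2).trans haddr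
        have hpne : g k ≠ g (k+2) := by
          intro h
          exact gne k 2 (by omega) (by omega) h.symm
        rcases hws_total _ _ pw yw paddr hpne with h|h
        · exact K1 (Or.inl h)
        · exact hU3 _ _ _ (Or.inl h) (Or.inr (Or.inl h1))
            (Or.inr (Or.inr (Or.inr ⟨hpo, haddr⟩)))
      · exact K1 (Or.inr (Or.inr (Or.inl (frws h1 (wsxy_of (hfrW _ _ h1).2 yw)))))
      · exact K1 (Or.inr (Or.inr (Or.inr (hpo_trans _ _ _ h1 hpo))))
    rcases eyz with h2|h2|h2|h2
    · exact YW (hws _ _ h2).1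
    · exact YW (hrf _ _ h2).1
    · obtain ⟨w₁, hw1, hw2⟩ := (hfr _ _).mp h2
      rcases epx with h1|h1|h1|h1
      · exact XWYR (hws _ _ h1).2.1 w₁ hw1 hw2
      · have pw := (hrf _ _ h1).1
        have w1w := (hrf _ _ hw1).1
        have paddr : (g k).addr = w₁.addr :=
          (hrf _ _ h1).2.2.trans (haddr.trans (hrf _ _ hw1).2.2.symm)
        by_cases he : g k = w₁
        · exact K3 (Or.inl (he ▸ hw2))
        · rcases hws_total _ _ pw w1w paddr he with h|h
          · exact K2 (Or.inr (Or.inr (Or.inl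
              ((hfr _ _).mpr ⟨g k, h1, hws_trans _ _ _ h hw2⟩))))
          · exact hU3 _ _ _ (Or.inr (Or.inl h1)) (Or.inr (Or.inr (Or.inr ⟨hpo, haddr⟩)))
              (Or.inr (Or.inr (Or.inl ((hfr _ _).mpr ⟨w₁, hw1, h⟩))))
      · exact XWYR (hfrW _ _ h1).2 w₁ hw1 hw2
      · exact K1 (Or.inr (Or.inr (Or.inr (hpo_trans _ _ _ h1 hpo))))
    · exact K2 (Or.inr (Or.inr (Or.inr (hpo_trans _ _ _ hpo h2))))
  have hApo : ∀ i j, (g i).addr = (g j).addr → po (g i) (g j) → False := by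
    intro i j haddr hpo
    have hji := ns i j (Or.inr (Or.inr (Or.inr hpo)))
    have e1 : g (i + (n-1) + 1) = g i := by
      rw [show i + (n-1) + 1 = i + n from by omega]; exact gper i
    have e2 : g (i + (n-1) + 2) = g j := by
      rw [show i + (n-1) + 2 = (i+1) + n from by omega, gper]; exact hji.symm
    exact hApo' (i + (n-1)) (by rw [e1, e2]; exact haddr) (by rw [e1, e2]; exact hpo)
  have hA : ∀ i j, (g i).addr = (g j).addr → (g i).proc = (g j).proc → g i = g j := by
    intro i j haddr hproc
    by_contra hne
    rcases hpo_total _ _ hproc hne with h|h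
    · exact hApo i j haddr h
    · exact hApo j i haddr.symm h
  -- Part B : at most three accesses per address
  have hread : ∀ m a, (g m).addr = a → (g m).isWrite = false →
      (rf (g (m + (n-1))) (g m) ∧ (g (m + (n-1))).isWrite = true ∧ (g (m + (n-1))).addr = a)
      ∨ (fr (g m) (g (m+1)) ∧ (g (m+1)).isWrite = true ∧ (g (m+1)).addr = a) := by
    intro m a ha hr
    have ein := hedge (m + (n-1))
    have e1 : g (m + (n-1) + 1) = g m := by
      rw [show m + (n-1) + 1 = m + n from by omega]; exact gper m
    rw [e1] at ein
    have eout := hedge m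
    rcases ein with h|h|h|h
    · exact absurd (hws _ _ h).2.1 (by simp [hr])
    · exact Or.inl ⟨h, (hrf _ _ h).1, (hrf _ _ h).2.2.trans ha⟩
    · exact absurd (hfrW _ _ h).2 (by simp [hr])
    · rcases eout with h'|h'|h'|h'
      · exact absurd (hws _ _ h').1 (by simp [hr])
      · exact absurd (hrf _ _ h').1 (by simp [hr])
      · exact Or.inr ⟨h', (hfrW _ _ h').2, (haddr_fr _ _ h').symm.trans ha⟩
      · exfalso
        have htr := hpo_trans _ _ _ h h'
        have := ns (m + (n-1)) (m+1) (Or.inr (Or.inr (Or.inr htr)))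
        rw [e1] at this
        exact gne m 1 one_pos (by omega) this
  have hB : ∀ a, ∃ j, ∀ k, (g k).addr = a → g k = g j ∨ g k = g (j+1) ∨ g k = g (j+2) := by
    intro a
    by_cases hwa : ∃ i, (g i).addr = a ∧ (g i).isWrite = true
    · obtain ⟨i0, hi0a, hi0w⟩ := hwa
      by_cases h2 : ∃ m, (g m).addr = a ∧ (g m).isWrite = true ∧ g m ≠ g i0
      · obtain ⟨m0, hm0a, hm0w, hm0ne⟩ := h2
        obtain ⟨i1, h1a, h1w, h2a, h2w, hws12⟩ :
            ∃ i1, (g i1).addr = a ∧ (g i1).isWrite = true ∧ (g (i1+1)).addr = a ∧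
              (g (i1+1)).isWrite = true ∧ ws (g i1) (g (i1+1)) := by
          rcases hws_total _ _ hi0w hm0w (hi0a.trans hm0a.symm)
              (fun h => hm0ne h.symm) with h|h
          · have he := ns i0 m0 (Or.inl h)
            exact ⟨i0, hi0a, hi0w, he ▸ hm0a, he ▸ hm0w, he ▸ h⟩
          · have he := ns m0 i0 (Or.inl h)
            exact ⟨m0, hm0a, hm0w, he ▸ hi0a, he ▸ hi0w, he ▸ h⟩
        have hWall : ∀ k, (g k).addr = a → (g k).isWrite = true →
            g k = g i1 ∨ g k = g (i1+1) := by
          intro k hka hkw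
          by_cases e1 : g k = g i1
          · exact Or.inl e1
          rcases hws_total _ _ h1w hkw (h1a.trans hka.symm) (fun h => e1 h.symm) with h|h
          · exact Or.inr (ns i1 k (Or.inl h))
          · have hca := ns k i1 (Or.inl h)
            have hcb := ns k (i1+1) (Or.inl (hws_trans _ _ _ h hws12))
            exact (gne i1 1 one_pos (by omega) (hcb.trans hca.symm)).elim
        have hRall : ∀ k, (g k).addr = a → (g k).isWrite = false → g k = g (i1+2) := by
          intro k hka hkr
          rcases hread k a hka hkr with ⟨hr1, hr2, hr3⟩ | ⟨hr1, hr2, hr3⟩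
          · rcases hWall _ hr3 hr2 with h|h
            · have hx := ns i1 k (Or.inr (Or.inl (h ▸ hr1)))
              rw [hx] at hkr
              simp [h2w] at hkr
            · have hx := ns (i1+1) k (Or.inr (Or.inl (h ▸ hr1)))
              rw [show i1+1+1 = i1+2 from by omega] at hx
              exact hx
          · rcases hWall _ hr3 hr2 with h|h
            · have hf : fr (g k) (g (i1+1)) := frws (h ▸ hr1) hws12
              have hx := ns k (i1+1) (Or.inr (Or.inr (Or.inl hf)))
              exact (gne i1 1 one_pos (by omega) (hx.trans h)).elim
            · have hm : (k+1) % n = (i1+1) % n := ginj _ _ h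
              have hx : g k = g i1 := gcong _ _ (Nat.ModEq.add_right_cancel' 1 hm)
              rw [hx] at hkr
              simp [h1w] at hkr
        refine ⟨i1, fun k hka => ?_⟩
        cases hb : (g k).isWrite with
        | false => exact Or.inr (Or.inr (hRall k hka hb))
        | true =>
          rcases hWall k hka hb with h|h
          · exact Or.inl h
          · exact Or.inr (Or.inl h)
      · push_neg at h2
        refine ⟨i0 + (n-1), fun k hka => ?_⟩
        have ej1 : g (i0 + (n-1) + 1) = g i0 := by
          rw [show i0+(n-1)+1 = i0+n from by omega]; exact gper i0
        have ej2 : g (i0 + (n-1) + 2) = g (i0+1) := by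
          rw [show i0+(n-1)+2 = (i0+1)+n from by omega]; exact gper (i0+1)
        cases hb : (g k).isWrite with
        | false =>
          rcases hread k a hka hb with ⟨hr1, hr2, hr3⟩ | ⟨hr1, hr2, hr3⟩
          · have hp := h2 _ hr3 hr2
            have hx := ns i0 k (Or.inr (Or.inl (hp ▸ hr1)))
            exact Or.inr (Or.inr (by rw [ej2]; exact hx))
          · have hp := h2 _ hr3 hr2
            refine Or.inl (gcong _ _ ?_)
            have hm : (k+1) % n = i0 % n := ginj _ _ hp
            have hm2 : (k+1+(n-1)) % n = (i0+(n-1)) % n := Nat.ModEq.add_right (n-1) hm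
            rw [show k+1+(n-1) = k + n from by omega, Nat.add_mod_right] at hm2
            exact hm2
        | true => exact Or.inr (Or.inl (by rw [ej1]; exact h2 _ hka hb))
    · push_neg at hwa
      refine ⟨0, fun k hka => ?_⟩
      exfalso
      cases hb : (g k).isWrite with
      | false =>
        rcases hread k a hka hb with ⟨_, hr2, hr3⟩ | ⟨_, hr2, hr3⟩
        · exact hwa _ hr3 hr2
        · exact hwa _ hr3 hr2
      | true => exact hwa _ hka hb
  -- assembling the answer
  have hnodup : c.Nodup := by
    rw [List.nodup_iff_injective_get]
    intro x y hxy
    apply Fin.ext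
    have hx : g x.1 = g y.1 := by
      rw [gdef, gdef, Nat.mod_eq_of_lt x.2, Nat.mod_eq_of_lt y.2,
        List.getD_eq_getElem _ _ x.2, List.getD_eq_getElem _ _ y.2]
      rw [List.get_eq_getElem, List.get_eq_getElem] at hxy
      exact hxy
    have := ginj _ _ hx
    rwa [Nat.mod_eq_of_lt x.2, Nat.mod_eq_of_lt y.2] at this
  have hmemg : ∀ e ∈ c, ∃ t, e = g t := by
    intro e he
    obtain ⟨t, ht, hte⟩ := List.mem_iff_getElem.mp he
    refine ⟨t, ?_⟩
    rw [gdef, Nat.mod_eq_of_lt ht, List.getD_eq_getElem _ _ ht, hte]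
  refine ⟨c, (isCycle_iff_cyc _ c).mpr hc, ?_⟩
  intro a
  obtain ⟨j, hj⟩ := hB a
  have hsub : c.filter (fun e => decide (e.addr = a)) ⊆ [g j, g (j+1), g (j+2)] := by
    intro e he
    rw [List.mem_filter] at he
    obtain ⟨t, rfl⟩ := hmemg e he.1
    have ha : (g t).addr = a := by simpa using he.2
    rcases hj t ha with h|h|h <;> simp [h]
  have hfnd : (c.filter (fun e => decide (e.addr = a))).Nodup := hnodup.filter _
  constructor
  · have := (hfnd.subperm hsub).length_le
    simpa using this
  · refine hfnd.pairwise_of_forall_ne ?_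
    intro x hx y hy hxy
    rw [List.mem_filter] at hx hy
    obtain ⟨tx, rfl⟩ := hmemg x hx.1
    obtain ⟨ty, rfl⟩ := hmemg y hy.1
    have hax : (g tx).addr = a := by simpa using hx.2
    have hay : (g ty).addr = a := by simpa using hy.2
    intro hproc
    exact hxy (hA tx ty (hax.trans hay.symm) hproc)
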